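/- For two one-qubit channels Ψ, Φ with affine parametrizations (κ_Ψ, η_Ψ) and (κ_Φ, η_Φ) (real 3-vectors of translation and distortion parameters), the superfidelity between their Jamiołkowski states equals (1/4)·(1 + κ_Ψ·κ_Φ + η_Ψ·η_Φ + √(3 - ‖κ_Ψ‖² - ‖η_Ψ‖²)·√(3 - ‖κ_Φ‖² - ‖η_Φ‖²)). -/

import Mathlib

open Matrix ComplexOrder

noncomputable def sG {N : ℕ} (ρ σ : Matrix (Fin N) (Fin N) ℂ) : ℝ :=
  (trace (ρ * σ)).re +
    Real.sqrt (1 - (trace (ρ * ρ)).re) * Real.sqrt (1 - (trace (σ * σ)).re)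

/-- Jamiołkowski state (half the dynamical matrix) of a one-qubit channel in
the affine parametrization by distortion κ and translation η. -/
noncomputable def qubitJam (κx κy κz ηx ηy ηz : ℝ) : Matrix (Fin 4) (Fin 4) ℂ :=
  ((1 : ℂ) / 4) •
    !![(ηz : ℂ) + κz + 1, 0, (κx : ℂ) + Complex.I * κy, (ηx : ℂ) + ηy;
       0, -(ηz : ℂ) + κz + 1, (ηx : ℂ) - ηy, (κx : ℂ) + Complex.I * κy;
       (κx : ℂ) - Complex.I * κy, (ηx : ℂ) - ηy, -(ηz : ℂ) - κz + 1, 0;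
       (ηx : ℂ) + ηy, (κx : ℂ) - Complex.I * κy, 0, (ηz : ℂ) - κz + 1]

lemma trJam (a b c d e f a' b' c' d' e' f' : ℝ) :
    (trace (qubitJam a b c d e f * qubitJam a' b' c' d' e' f')).re =
      (1 + (a*a' + b*b' + c*c') + (d*d' + e*e' + f*f')) / 4 := by
  simp only [qubitJam, trace, diag, mul_apply, Fin.sum_univ_four, Matrix.smul_apply,
    smul_eq_mul, of_apply, cons_val', cons_val_zero, cons_val_one, head_cons,
    empty_val', cons_val_fin_one, head_fin_const, cons_val_two, tail_cons,
    cons_val_three]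
  simp [Complex.ext_iff]
  ring

lemma sqrt_div_four (x : ℝ) : Real.sqrt (x / 4) = Real.sqrt x / 2 := by
  rcases le_or_gt 0 x with h | h
  · rw [Real.sqrt_div h, show (4:ℝ) = 2^2 by norm_num, Real.sqrt_sq (by norm_num : (0:ℝ) ≤ 2)]
  · rw [Real.sqrt_eq_zero_of_nonpos (by linarith),
      Real.sqrt_eq_zero_of_nonpos h.le]
    simp

theorem superfidelity_one_qubit_channels
    (κxΨ κyΨ κzΨ ηxΨ ηyΨ ηzΨ κxΦ κyΦ κzΦ ηxΦ ηyΦ ηzΦ : ℝ)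
    (hΨ : (qubitJam κxΨ κyΨ κzΨ ηxΨ ηyΨ ηzΨ).PosSemidef)
    (hΦ : (qubitJam κxΦ κyΦ κzΦ ηxΦ ηyΦ ηzΦ).PosSemidef) :
    sG (qubitJam κxΨ κyΨ κzΨ ηxΨ ηyΨ ηzΨ) (qubitJam κxΦ κyΦ κzΦ ηxΦ ηyΦ ηzΦ) =
      (1 / 4) * (1 + (κxΨ * κxΦ + κyΨ * κyΦ + κzΨ * κzΦ)
        + (ηxΨ * ηxΦ + ηyΨ * ηyΦ + ηzΨ * ηzΦ)
        + Real.sqrt (3 - (κxΨ ^ 2 + κyΨ ^ 2 + κzΨ ^ 2) - (ηxΨ ^ 2 + ηyΨ ^ 2 + ηzΨ ^ 2)) *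
          Real.sqrt (3 - (κxΦ ^ 2 + κyΦ ^ 2 + κzΦ ^ 2) - (ηxΦ ^ 2 + ηyΦ ^ 2 + ηzΦ ^ 2))) := by
  unfold sG
  rw [trJam, trJam, trJam]
  have h1 : (1 : ℝ) - (1 + (κxΨ*κxΨ + κyΨ*κyΨ + κzΨ*κzΨ) + (ηxΨ*ηxΨ + ηyΨ*ηyΨ + ηzΨ*ηzΨ)) / 4
      = (3 - (κxΨ ^ 2 + κyΨ ^ 2 + κzΨ ^ 2) - (ηxΨ ^ 2 + ηyΨ ^ 2 + ηzΨ ^ 2)) / 4 := by ring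
  have h2 : (1 : ℝ) - (1 + (κxΦ*κxΦ + κyΦ*κyΦ + κzΦ*κzΦ) + (ηxΦ*ηxΦ + ηyΦ*ηyΦ + ηzΦ*ηzΦ)) / 4
      = (3 - (κxΦ ^ 2 + κyΦ ^ 2 + κzΦ ^ 2) - (ηxΦ ^ 2 + ηyΦ ^ 2 + ηzΦ ^ 2)) / 4 := by ring
  rw [h1, h2, sqrt_div_four, sqrt_div_four]
  ring
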